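/- Let F be a Pythagorean field of characteristic not 2 and let H be a quaternion algebra over F. Then every commutator in H is itself a commutator of two commutators: {xy − yx : x, y ∈ H} = {uv − vu : u, v commutators in H}. In particular, the set of commutators of H is an F-vector subspace of H. -/

import Mathlib

open Quaternion

lemma comm_re {F : Type*} [Field F] {c₁ c₂ : F} (y z : ℍ[F, c₁, c₂]) :
    (y * z - z * y).re = 0 := by
  simp only [QuaternionAlgebra.re_sub, QuaternionAlgebra.re_mul]
  ring

lemma key {F : Type*} [Field F] (h2 : (2 : F) ≠ 0) (c₁ c₂ w₁ w₂ w₃ p₁ p₂ p₃ : F)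
    (horth : c₁*p₁*w₁ + c₂*p₂*w₂ - c₁*c₂*p₃*w₃ = 0)
    (hQ : c₁*p₁^2 + c₂*p₂^2 - c₁*c₂*p₃^2 ≠ 0) :
    ∃ y z : ℍ[F, c₁, c₂], y.re = 0 ∧ z.re = 0 ∧
      (⟨0, w₁, w₂, w₃⟩ : ℍ[F, c₁, c₂]) = y * z - z * y := by
  set Q : F := c₁*p₁^2 + c₂*p₂^2 - c₁*c₂*p₃^2 with hQdef
  have h2Q : (2*Q) ≠ 0 := mul_ne_zero h2 hQ
  set y : ℍ[F, c₁, c₂] := ⟨0, p₁, p₂, p₃⟩ with hy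
  set u : ℍ[F, c₁, c₂] := ⟨0, -c₂*(p₂*w₃ - p₃*w₂), -c₁*(p₃*w₁ - p₁*w₃), p₁*w₂ - p₂*w₁⟩ with hu
  have hw : (2*Q) • (⟨0, w₁, w₂, w₃⟩ : ℍ[F, c₁, c₂]) = y * u - u * y := by
    apply QuaternionAlgebra.ext
    · simp only [QuaternionAlgebra.re_smul, QuaternionAlgebra.re_sub,
        QuaternionAlgebra.re_mul, hy, hu, smul_eq_mul]
      ring
    · simp only [QuaternionAlgebra.imI_smul, QuaternionAlgebra.imI_sub,
        QuaternionAlgebra.imI_mul, hy, hu, smul_eq_mul, hQdef]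
      linear_combination (2*p₁) * horth
    · simp only [QuaternionAlgebra.imJ_smul, QuaternionAlgebra.imJ_sub,
        QuaternionAlgebra.imJ_mul, hy, hu, smul_eq_mul, hQdef]
      linear_combination (2*p₂) * horth
    · simp only [QuaternionAlgebra.imK_smul, QuaternionAlgebra.imK_sub,
        QuaternionAlgebra.imK_mul, hy, hu, smul_eq_mul, hQdef]
      linear_combination (2*p₃) * horth
  refine ⟨y, (2*Q)⁻¹ • u, rfl, by simp [hu], ?_⟩
  rw [mul_smul_comm, smul_mul_assoc, ← smul_sub, ← hw, inv_smul_smul₀ h2Q]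

lemma pure_comm {F : Type*} [Field F] (h2 : (2 : F) ≠ 0) (a b : F) (ha : a ≠ 0) (hb : b ≠ 0)
    (x : ℍ[F, -a, -b]) (hx : x.re = 0) :
    ∃ y z : ℍ[F, -a, -b], y.re = 0 ∧ z.re = 0 ∧ x = y * z - z * y := by
  have hxe : x = (⟨0, x.imI, x.imJ, x.imK⟩ : ℍ[F, -a, -b]) := by
    apply QuaternionAlgebra.ext <;> simp [hx]
  set w₁ := x.imI; set w₂ := x.imJ; set w₃ := x.imK
  rw [hxe]
  by_cases h1 : a*w₁^2 + b*w₂^2 ≠ 0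
  · refine key h2 (-a) (-b) w₁ w₂ w₃ (-b*w₂) (a*w₁) 0 (by ring) ?_
    have he : (-a)*(-b*w₂)^2 + (-b)*(a*w₁)^2 - (-a)*(-b)*(0:F)^2
        = (-(a*b)) * (a*w₁^2 + b*w₂^2) := by ring
    rw [he]
    exact mul_ne_zero (neg_ne_zero.mpr (mul_ne_zero ha hb)) h1
  by_cases h2' : w₁^2 + b*w₃^2 ≠ 0
  · refine key h2 (-a) (-b) w₁ w₂ w₃ (-b*w₃) 0 w₁ (by ring) ?_
    have he : (-a)*(-b*w₃)^2 + (-b)*(0:F)^2 - (-a)*(-b)*w₁^2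
        = (-(a*b)) * (w₁^2 + b*w₃^2) := by ring
    rw [he]
    exact mul_ne_zero (neg_ne_zero.mpr (mul_ne_zero ha hb)) h2'
  by_cases h3 : w₂^2 + a*w₃^2 ≠ 0
  · refine key h2 (-a) (-b) w₁ w₂ w₃ 0 (a*w₃) (-w₂) (by ring) ?_
    have he : (-a)*(0:F)^2 + (-b)*(a*w₃)^2 - (-a)*(-b)*(-w₂)^2
        = (-(a*b)) * (w₂^2 + a*w₃^2) := by ring
    rw [he]
    exact mul_ne_zero (neg_ne_zero.mpr (mul_ne_zero ha hb)) h3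
  push_neg at h1 h2' h3
  by_cases hw1 : w₁ = 0
  · have hw2 : w₂ = 0 := by
      have : b * w₂^2 = 0 := by linear_combination h1 - a * hw1 * (w₁ + 0*1) - a*hw1*0
      have := (mul_eq_zero.mp this).resolve_left hb
      exact pow_eq_zero_iff (n := 2) (by norm_num) |>.mp this
    have hw3 : w₃ = 0 := by
      have : b * w₃^2 = 0 := by linear_combination h2' - hw1 * (w₁ + 0)
      have := (mul_eq_zero.mp this).resolve_left hb
      exact pow_eq_zero_iff (n := 2) (by norm_num) |>.mp this
    refine ⟨0, 0, rfl, rfl, ?_⟩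
    rw [hw1, hw2, hw3]
    apply QuaternionAlgebra.ext <;> simp
  · have hw3 : w₃ ≠ 0 := by
      intro h
      apply hw1
      have : w₁^2 = 0 := by linear_combination h2' - b * h * (w₃ + 0)
      exact pow_eq_zero_iff (n := 2) (by norm_num) |>.mp this
    have hw2 : w₂ ≠ 0 := by
      intro h
      apply hw1
      have : a * w₁^2 = 0 := by linear_combination h1 - b * h * (w₂ + 0)
      have := (mul_eq_zero.mp this).resolve_left ha
      exact pow_eq_zero_iff (n := 2) (by norm_num) |>.mp this
    refine key h2 (-a) (-b) w₁ w₂ w₃ (-b*(w₂+w₃)) (a*w₁) w₁ (by ring) ?_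
    have he : (-a)*(-b*(w₂+w₃))^2 + (-b)*(a*w₁)^2 - (-a)*(-b)*w₁^2
        = -2*a*b^2*w₂*w₃ := by
      linear_combination (-(a*b))*h1 + (-(a*b))*h2'
    rw [he]
    exact mul_ne_zero (mul_ne_zero (mul_ne_zero (mul_ne_zero (by simpa using h2) ha)
      (pow_ne_zero 2 hb)) hw2) hw3

theorem stmt_5 (F : Type*) [Field F] (h2 : (2 : F) ≠ 0)
    (hpyth : ∀ x y : F, ∃ z : F, x ^ 2 + y ^ 2 = z ^ 2)
    (a b : F) (ha : a ≠ 0) (hb : b ≠ 0) :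
    ({x : ℍ[F, -a, -b] | ∃ y z : ℍ[F, -a, -b], x = y * z - z * y} =
      {x : ℍ[F, -a, -b] | ∃ u v : ℍ[F, -a, -b],
        (∃ y z : ℍ[F, -a, -b], u = y * z - z * y) ∧
        (∃ y z : ℍ[F, -a, -b], v = y * z - z * y) ∧ x = u * v - v * u}) ∧
    ∃ V : Submodule F ℍ[F, -a, -b],
      (V : Set ℍ[F, -a, -b]) = {x : ℍ[F, -a, -b] | ∃ y z : ℍ[F, -a, -b], x = y * z - z * y} := by
  have hset : {x : ℍ[F, -a, -b] | ∃ y z : ℍ[F, -a, -b], x = y * z - z * y}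
      = {x : ℍ[F, -a, -b] | x.re = 0} := by
    ext x
    simp only [Set.mem_setOf_eq]
    constructor
    · rintro ⟨y, z, rfl⟩; exact comm_re y z
    · intro hx
      obtain ⟨y, z, _, _, hxe⟩ := pure_comm h2 a b ha hb x hx
      exact ⟨y, z, hxe⟩
  constructor
  · ext x
    simp only [Set.mem_setOf_eq]
    constructor
    · rintro ⟨y, z, rfl⟩
      obtain ⟨u, v, hu, hv, hx⟩ := pure_comm h2 a b ha hb _ (comm_re y z)
      obtain ⟨y₁, z₁, _, _, hue⟩ := pure_comm h2 a b ha hb u hu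
      obtain ⟨y₂, z₂, _, _, hve⟩ := pure_comm h2 a b ha hb v hv
      exact ⟨u, v, ⟨y₁, z₁, hue⟩, ⟨y₂, z₂, hve⟩, hx⟩
    · rintro ⟨u, v, _, _, rfl⟩
      exact ⟨u, v, rfl⟩
  · refine ⟨LinearMap.ker
      (⟨⟨fun x : ℍ[F, -a, -b] => x.re, fun x y => rfl⟩, fun r x => rfl⟩ :
        ℍ[F, -a, -b] →ₗ[F] F), ?_⟩
    rw [hset]
    ext x
    simp only [SetLike.mem_coe, LinearMap.mem_ker, Set.mem_setOf_eq]
    exact Iff.rfl
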